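/- Let L be a nilpotent Lie algebra over a field of characteristic zero and f : L → L a Lie algebra endomorphism. If the induced map on the abelianization L/[L,L] → L/[L,L] is the identity, then f is an automorphism of L. -/

import Mathlib

section aux

variable (k : Type) [Field k] (L : Type) [LieRing L] [LieAlgebra k L]

lemma lcs_bracket_le (i : ℕ) : ∀ j : ℕ,
    ⁅LieModule.lowerCentralSeries k L L i, LieModule.lowerCentralSeries k L L j⁆ ≤
      LieModule.lowerCentralSeries k L L (i + j + 1) := by
  induction i with
  | zero =>
    intro j
    rw [LieModule.lowerCentralSeries_zero]
    rw [show 0 + j + 1 = j + 1 by omega, LieModule.lowerCentralSeries_succ]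
  | succ i ih =>
    intro j
    rw [LieSubmodule.lie_le_iff]
    intro x hx m hm
    revert x
    have hx' : ∀ x, x ∈ Submodule.span k {m : L | ∃ a ∈ (⊤ : LieIdeal k L),
        ∃ b ∈ LieModule.lowerCentralSeries k L L i, ⁅a, b⁆ = m} →
        ⁅x, m⁆ ∈ LieModule.lowerCentralSeries k L L (i + 1 + j + 1) := by
      intro x hx
      induction hx using Submodule.span_induction with
      | mem x h =>
        obtain ⟨a, -, b, hb, rfl⟩ := h
        rw [lie_lie]
        apply sub_mem
        · have h1 : ⁅b, m⁆ ∈ LieModule.lowerCentralSeries k L L (i + j + 1) :=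
            ih j (LieSubmodule.lie_mem_lie hb hm)
          have : ⁅a, ⁅b, m⁆⁆ ∈ ⁅(⊤ : LieIdeal k L),
              LieModule.lowerCentralSeries k L L (i + j + 1)⁆ :=
            LieSubmodule.lie_mem_lie trivial h1
          rwa [← LieModule.lowerCentralSeries_succ,
            show i + j + 1 + 1 = i + 1 + j + 1 by omega] at this
        · have h1 : ⁅a, m⁆ ∈ LieModule.lowerCentralSeries k L L (j + 1) := by
            rw [LieModule.lowerCentralSeries_succ]
            exact LieSubmodule.lie_mem_lie trivial hm
          have := ih (j + 1) (LieSubmodule.lie_mem_lie hb h1)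
          rwa [show i + (j + 1) + 1 = i + 1 + j + 1 by omega] at this
      | zero => simp
      | add x y _ _ hx hy => rw [add_lie]; exact add_mem hx hy
      | smul c x _ hx => rw [smul_lie]; exact Submodule.smul_mem _ c hx
    intro x hx
    apply hx' x
    rw [← LieSubmodule.lieIdeal_oper_eq_linear_span', LieSubmodule.mem_toSubmodule,
      ← LieModule.lowerCentralSeries_succ]
    exact hx

end aux

/-- If `f` is an endomorphism of a finite-dimensional nilpotent Lie algebra `L`
over a field of characteristic zero inducing the identity on the abelianization `L/[L,L]`
(i.e. `f x ≡ x` modulo the commutator ideal), then `f` is an automorphism. -/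
theorem stmt1 (k : Type) [Field k] [CharZero k]
    (L : Type) [LieRing L] [LieAlgebra k L]
    [FiniteDimensional k L] [LieRing.IsNilpotent L]
    (f : L →ₗ⁅k⁆ L)
    (hab : ∀ x : L, f x - x ∈ LieModule.lowerCentralSeries k L L 1) :
    Function.Bijective f := by
  set N : Module.End k L := (f : L →ₗ[k] L) - LinearMap.id with hN
  have hNapp : ∀ x : L, N x = f x - x := fun x => rfl
  -- f maps the lower central series into itself
  have hf_lcs : ∀ i : ℕ, ∀ x ∈ LieModule.lowerCentralSeries k L L i,
      f x ∈ LieModule.lowerCentralSeries k L L i := by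
    intro i x hx
    exact LieIdeal.map_lowerCentralSeries_le i (f := f) (LieIdeal.mem_map hx)
  -- N maps LCS i into LCS (i+1)
  have key : ∀ i : ℕ, ∀ x ∈ LieModule.lowerCentralSeries k L L i,
      N x ∈ LieModule.lowerCentralSeries k L L (i + 1) := by
    intro i
    induction i with
    | zero => intro x _; rw [hNapp]; exact hab x
    | succ i ih =>
      intro x hx
      have hx' : x ∈ Submodule.span k {m : L | ∃ a ∈ (⊤ : LieIdeal k L),
          ∃ b ∈ LieModule.lowerCentralSeries k L L i, ⁅a, b⁆ = m} := by
        rw [← LieSubmodule.lieIdeal_oper_eq_linear_span', LieSubmodule.mem_toSubmodule,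
          ← LieModule.lowerCentralSeries_succ]
        exact hx
      clear hx
      induction hx' using Submodule.span_induction with
      | mem y h =>
        obtain ⟨a, -, b, hb, rfl⟩ := h
        have hdec : N ⁅a, b⁆ = ⁅N a, f b⁆ + ⁅a, N b⁆ := by
          simp only [hNapp, LieHom.map_lie]
          rw [sub_lie, lie_sub]
          abel
        rw [hdec]
        apply add_mem
        · have h1 : ⁅N a, f b⁆ ∈ ⁅LieModule.lowerCentralSeries k L L 1,
              LieModule.lowerCentralSeries k L L i⁆ :=
            LieSubmodule.lie_mem_lie (hab a) (hf_lcs i b hb)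
          have := lcs_bracket_le k L 1 i h1
          rwa [show 1 + i + 1 = i + 1 + 1 by omega] at this
        · have h1 : N b ∈ LieModule.lowerCentralSeries k L L (i + 1) := ih b hb
          have : ⁅a, N b⁆ ∈ ⁅(⊤ : LieIdeal k L),
              LieModule.lowerCentralSeries k L L (i + 1)⁆ :=
            LieSubmodule.lie_mem_lie trivial h1
          rwa [← LieModule.lowerCentralSeries_succ] at this
      | zero => simp
      | add y z _ _ hy hz => rw [map_add]; exact add_mem hy hz
      | smul c y _ hy => rw [map_smul]; exact Submodule.smul_mem _ c hy
  -- N is nilpotent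
  obtain ⟨n, hn⟩ := LieModule.IsNilpotent.nilpotent k L L
  have hpow : ∀ i : ℕ, ∀ x : L, (N ^ i) x ∈ LieModule.lowerCentralSeries k L L i := by
    intro i
    induction i with
    | zero => intro x; simp
    | succ i ih =>
      intro x
      rw [pow_succ', Module.End.mul_apply]
      exact key i _ (ih x)
  have hNnil : IsNilpotent N := by
    refine ⟨n, ?_⟩
    ext x
    have := hpow n x
    rw [hn] at this
    simpa using this
  have hunit : IsUnit ((f : L →ₗ[k] L) : Module.End k L) := by
    have : ((f : L →ₗ[k] L) : Module.End k L) = 1 + N := by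
      rw [hN, Module.End.one_eq_id]; abel
    rw [this]
    exact hNnil.isUnit_one_add
  have := (Module.End.isUnit_iff _).mp hunit
  exact this
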